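/- arXiv:2111.04697 — 2 statements merged into one kernel-verified Lean document; each statement's English description precedes it below -/
import Mathlib

section
/- Let k be a field, m ≥ 2, d divisible by m, and q a prime dividing m with char(k) not dividing q. If f(x,z) ∈ k[x,z] is homogeneous of degree d and f = g^q for some homogeneous degree d/q polynomial g ∈ k̄[x,z] over the algebraic closure, then there exist a ∈ k and a homogeneous degree d/q polynomial h(x,z) ∈ k[x,z] with f = a·h^q. -/
open MvPolynomial

namespace MPD

noncomputable def mA (i w : ℕ) : Fin 2 →₀ ℕ := Finsupp.single 0 i + Finsupp.single 1 w

@[simp] lemma mA_apply0 (i w : ℕ) : (mA i w) 0 = i := by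
  simp [mA, Finsupp.single_apply]

@[simp] lemma mA_apply1 (i w : ℕ) : (mA i w) 1 = w := by
  simp [mA, Finsupp.single_apply]

lemma mA_add (i w i' w' : ℕ) : mA i w + mA i' w' = mA (i + i') (w + w') := by
  simp only [mA, Finsupp.single_add]
  abel

lemma eq_mA (μ : Fin 2 →₀ ℕ) : μ = mA (μ 0) (μ 1) := by
  ext i
  fin_cases i <;> simp

lemma deg2 (μ : Fin 2 →₀ ℕ) : μ.degree = μ 0 + μ 1 := by
  rw [Finsupp.degree_apply, Finset.sum_subset (Finset.subset_univ _)
    (by intro i _ hi; simpa using Finsupp.notMem_support_iff.mp hi), Fin.sum_univ_two]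

@[simp] lemma mA_degree (i w : ℕ) : (mA i w).degree = i + w := by
  rw [deg2]; simp

variable {L : Type*} [CommRing L]

lemma homog_coeff_form {p : MvPolynomial (Fin 2) L} {n : ℕ} (hp : p.IsHomogeneous n)
    {μ : Fin 2 →₀ ℕ} (h : coeff μ p ≠ 0) : μ = mA (μ 0) (n - μ 0) ∧ μ 0 ≤ n := by
  have hd : μ.degree = n := by
    by_contra hne
    exact h (hp.coeff_eq_zero hne)
  rw [deg2] at hd
  constructor
  · rw [eq_mA μ]; congr 1 <;> simp <;> omega
  · omega

lemma xbound_mul {p r : MvPolynomial (Fin 2) L} {A B : ℕ}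
    (hp : ∀ μ, coeff μ p ≠ 0 → μ 0 ≤ A) (hr : ∀ μ, coeff μ r ≠ 0 → μ 0 ≤ B) :
    ∀ μ, coeff μ (p * r) ≠ 0 → μ 0 ≤ A + B := by
  classical
  intro μ h
  rw [coeff_mul] at h
  obtain ⟨⟨u, v⟩, huv, hne⟩ := Finset.exists_ne_zero_of_sum_ne_zero h
  have hsum : u + v = μ := Finset.HasAntidiagonal.mem_antidiagonal.mp huv
  have h0 : u 0 + v 0 = μ 0 := by rw [← hsum]; rfl
  have h1 := hp u (left_ne_zero_of_mul hne)
  have h2 := hr v (right_ne_zero_of_mul hne)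
  omega

lemma xbound_pow {p : MvPolynomial (Fin 2) L} {A : ℕ}
    (hp : ∀ μ, coeff μ p ≠ 0 → μ 0 ≤ A) (i : ℕ) :
    ∀ μ, coeff μ (p ^ i) ≠ 0 → μ 0 ≤ i * A := by
  induction i with
  | zero =>
    intro μ h
    rw [pow_zero, coeff_one] at h
    split at h
    · next heq => rw [← heq]; simp
    · exact absurd rfl h
  | succ i ih =>
    rw [pow_succ]
    intro μ hμ
    have := xbound_mul ih hp μ hμ
    have : i * A + A = (i+1) * A := by ring
    omega

lemma xbound_C (c : L) : ∀ μ, coeff μ (C c : MvPolynomial (Fin 2) L) ≠ 0 → μ 0 ≤ 0 := by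
  intro μ h
  rw [coeff_C] at h
  split at h
  · next heq => rw [← heq]; simp
  · exact absurd rfl h

lemma top_mul {p r : MvPolynomial (Fin 2) L} {A B a c : ℕ}
    (hp : ∀ μ, coeff μ p ≠ 0 → μ 0 ≤ A) (hr : ∀ μ, coeff μ r ≠ 0 → μ 0 ≤ B)
    (hP : p.IsHomogeneous a) (hR : r.IsHomogeneous c) :
    coeff (mA (A + B) ((a - A) + (c - B))) (p * r)
      = coeff (mA A (a - A)) p * coeff (mA B (c - B)) r := by
  classical
  rw [coeff_mul]
  apply Finset.sum_eq_single (mA A (a - A), mA B (c - B))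
  · rintro ⟨u, v⟩ hmem hne
    by_contra h
    have hu : coeff u p ≠ 0 := left_ne_zero_of_mul h
    have hv : coeff v r ≠ 0 := right_ne_zero_of_mul h
    have hsum : u + v = mA (A + B) ((a - A) + (c - B)) := Finset.HasAntidiagonal.mem_antidiagonal.mp hmem
    have h0 : u 0 + v 0 = A + B := by
      have := congrArg (fun μ => μ 0) hsum
      simpa using this
    have hu0 : u 0 ≤ A := hp u hu
    have hv0 : v 0 ≤ B := hr v hv
    have huA : u 0 = A := by omega
    have hvB : v 0 = B := by omega
    obtain ⟨hufo, _⟩ := homog_coeff_form hP hu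
    obtain ⟨hvfo, _⟩ := homog_coeff_form hR hv
    apply hne
    rw [hufo, hvfo, huA, hvB]
  · intro habs
    exact absurd (Finset.HasAntidiagonal.mem_antidiagonal.mpr (by rw [mA_add])) habs

lemma top_pow {p : MvPolynomial (Fin 2) L} {A a : ℕ}
    (hp : ∀ μ, coeff μ p ≠ 0 → μ 0 ≤ A) (hP : p.IsHomogeneous a) (i : ℕ) :
    coeff (mA (i * A) (i * (a - A))) (p ^ i) = (coeff (mA A (a - A)) p) ^ i := by
  induction i with
  | zero =>
    simp only [zero_mul, pow_zero]
    have : mA 0 0 = 0 := by ext j; fin_cases j <;> simp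
    rw [this, coeff_one]
    simp
  | succ i ih =>
    rw [pow_succ, pow_succ, ← ih]
    have hbound := xbound_pow hp i
    have hhom : (p ^ i).IsHomogeneous (i * a) := by
      have := hP.pow i
      rwa [mul_comm] at this
    have key := top_mul hbound hp hhom hP
    have e1 : i * a - i * A = i * (a - A) := by rw [Nat.mul_sub]
    have e2 : (i+1) * A = i * A + A := by ring
    have e3 : (i+1) * (a - A) = i * (a - A) + (a - A) := by ring
    rw [e2, e3, ← e1]
    exact key

lemma coeff_msum {S : Finset ℕ} {v : ℕ → L} {n : ℕ} (w : ℕ) (hw : w ≤ n)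
    (hS : ∀ i ∈ S, i ≤ n) :
    coeff (mA w (n - w)) (∑ i ∈ S, monomial (mA i (n - i)) (v i))
      = if w ∈ S then v w else 0 := by
  classical
  rw [coeff_sum]
  rw [Finset.sum_congr rfl (g := fun i => if i = w then v i else 0) ?_]
  · exact Finset.sum_ite_eq' S w v
  · intro i hi
    rw [coeff_monomial]
    congr 1
    rw [eq_iff_iff]
    constructor
    · intro hEq
      have := congrArg (fun μ => μ 0) hEq
      simpa using this
    · rintro rfl; rfl

lemma coeff_msum_off {S : Finset ℕ} {v : ℕ → L} {n : ℕ} {μ : Fin 2 →₀ ℕ}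
    (hμ : μ.degree ≠ n) (hS : ∀ i ∈ S, i ≤ n) :
    coeff μ (∑ i ∈ S, monomial (mA i (n - i)) (v i)) = 0 := by
  classical
  rw [coeff_sum]
  apply Finset.sum_eq_zero
  intro w hw
  rw [coeff_monomial, if_neg]
  intro hEq
  apply hμ
  rw [← hEq, mA_degree]
  have := hS w hw
  omega

lemma descent {K L : Type*} [Field K] [Field L] (φ : K →+* L) (q n : ℕ) (hq2 : 2 ≤ q)
    (hqK : (q : K) ≠ 0) (f : MvPolynomial (Fin 2) K) (g : MvPolynomial (Fin 2) L)
    (hg : g.IsHomogeneous n) (hfg : MvPolynomial.map φ f = g ^ q) :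
    ∃ (a : K) (h : MvPolynomial (Fin 2) K), h.IsHomogeneous n ∧ f = C a * h ^ q := by
  classical
  have hinj : Function.Injective (MvPolynomial.map φ : MvPolynomial (Fin 2) K → _) :=
    MvPolynomial.map_injective φ φ.injective
  by_cases hg0 : g = 0
  · refine ⟨0, 0, isHomogeneous_zero _ _ _, hinj ?_⟩
    rw [hfg, hg0, zero_pow (by omega : q ≠ 0), map_mul]
    simp
  obtain ⟨r, hr⟩ : ∃ r, q = r + 2 := ⟨q - 2, by omega⟩
  subst hr
  set q : ℕ := r + 2 with hqdef
  -- the top x-exponent of g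
  obtain ⟨μJ, hμJmem, hμJ⟩ := Finset.exists_mem_eq_sup g.support
      (MvPolynomial.support_nonempty.mpr hg0) (fun μ => μ 0)
  set J := g.support.sup (fun μ => μ 0) with hJdef
  have hbound : ∀ μ, coeff μ g ≠ 0 → μ 0 ≤ J := fun μ h =>
    Finset.le_sup (f := fun μ => μ 0) (mem_support_iff.mpr h)
  have hcJ : coeff μJ g ≠ 0 := mem_support_iff.mp hμJmem
  obtain ⟨hμJform, hJn'⟩ := homog_coeff_form hg hcJ
  have hJ0 : J = μJ 0 := hμJ
  have hμJA : mA J (n - J) = μJ := by rw [hJ0, ← hμJform]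
  have hJn : J ≤ n := by rw [hJ0]; exact hJn'
  set b := coeff (mA J (n - J)) g with hbdef
  have hb : b ≠ 0 := by rw [hbdef, hμJA]; exact hcJ
  have hqL : (q : L) ≠ 0 := by
    intro h
    apply hqK
    apply φ.injective
    rw [map_natCast, map_zero, h]
  -- the scalar a
  have hgtop : coeff (mA (q*J) (q*(n-J))) (g^q) = b ^ q := top_pow hbound hg q
  set a := coeff (mA (q*J) (q*(n-J))) f with hadef
  have hφa : φ a = b ^ q := by rw [hadef, ← coeff_map, hfg, hgtop]
  have ha : a ≠ 0 := fun h => (pow_ne_zero q hb) (by rw [← hφa, h, map_zero])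
  -- key induction
  have key : ∀ t i, J - i ≤ t → ∃ e : K, coeff (mA i (n - i)) g = b * φ e := by
    intro t
    induction t with
    | zero =>
      intro i hi
      rcases Nat.lt_or_ge J i with hJi | hJi
      · refine ⟨0, ?_⟩
        rw [map_zero, mul_zero]
        by_contra h
        have := hbound _ h
        rw [mA_apply0] at this
        omega
      · have hiJ : i = J := by omega
        refine ⟨1, ?_⟩
        rw [map_one, mul_one, hiJ]
    | succ t IH =>
      intro i hi
      rcases Nat.lt_or_ge i J with hij | hij
      · -- main step
        have He : ∀ w, ∃ e : K, i < w → coeff (mA w (n - w)) g = b * φ e := by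
          intro w
          rcases Nat.lt_or_ge i w with h | h
          · obtain ⟨e, he⟩ := IH w (by omega)
            exact ⟨e, fun _ => he⟩
          · exact ⟨0, fun hc => absurd hc (by omega)⟩
        choose e he using He
        set s₀ : MvPolynomial (Fin 2) K :=
          ∑ w ∈ Finset.Ioc i n, monomial (mA w (n - w)) (e w) with hs₀
        set s : MvPolynomial (Fin 2) L := C b * MvPolynomial.map φ s₀ with hs
        set t' : MvPolynomial (Fin 2) L := g - s with ht'
        have hs₀hom : s₀.IsHomogeneous n := by
          apply IsHomogeneous.sum
          intro w hw
          apply isHomogeneous_monomial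
          rw [mA_degree]
          have := (Finset.mem_Ioc.mp hw).2
          omega
        have hshom : s.IsHomogeneous n := (hs₀hom.map φ).C_mul b
        have hthom : t'.IsHomogeneous n := hg.sub hshom
        have hscoeff : ∀ w, w ≤ n → coeff (mA w (n - w)) s
            = if w ∈ Finset.Ioc i n then b * φ (e w) else 0 := by
          intro w hw
          rw [hs, coeff_C_mul, coeff_map, hs₀,
            coeff_msum w hw (fun j hj => (Finset.mem_Ioc.mp hj).2)]
          split
          · rfl
          · rw [map_zero, mul_zero]
        have htbound : ∀ μ, coeff μ t' ≠ 0 → μ 0 ≤ i := by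
          intro μ h
          by_contra hgt
          obtain ⟨hform, hn⟩ := homog_coeff_form hthom h
          apply h
          have hw : μ 0 ∈ Finset.Ioc i n := Finset.mem_Ioc.mpr ⟨by omega, hn⟩
          rw [ht', coeff_sub, hform, hscoeff (μ 0) hn, if_pos hw,
            ← he (μ 0) (by omega), sub_self]
        have hsbound : ∀ μ, coeff μ s ≠ 0 → μ 0 ≤ J := by
          intro μ h
          obtain ⟨hform, hn⟩ := homog_coeff_form hshom h
          by_contra hgt
          have hne : μ 0 ∈ Finset.Ioc i n := Finset.mem_Ioc.mpr ⟨by omega, hn⟩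
          have hcg : coeff (mA (μ 0) (n - μ 0)) g = 0 := by
            by_contra hc
            have := hbound _ hc
            rw [mA_apply0] at this
            omega
          apply h
          rw [hform, hscoeff _ hn, if_pos hne, ← he _ (by omega), hcg]
        have hgst : g = s + t' := by rw [ht']; ring
        -- the target monomial
        set T := mA ((r+1)*J + i) ((r+1)*(n-J) + (n-i)) with hT
        have hcoefff : φ (coeff T f) = coeff T (g ^ q) := by rw [← coeff_map, hfg]
        have hsq : s ^ q = C (b ^ q) * MvPolynomial.map φ (s₀ ^ q) := by
          rw [hs, mul_pow, map_pow (MvPolynomial.map φ) s₀ q, map_pow C b q]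
        -- coefficient of the main term
        have hsJ : coeff (mA J (n - J)) s = b := by
          rw [hscoeff J hJn, if_pos (Finset.mem_Ioc.mpr ⟨hij, hJn⟩), ← he J hij]
        have hmain : coeff T (s ^ (r+1) * t') = b ^ (r+1) * coeff (mA i (n-i)) t' := by
          have hb1 := xbound_pow hsbound (r+1)
          have hhom1 : (s ^ (r+1)).IsHomogeneous ((r+1) * n) := by
            have := hshom.pow (r+1); rwa [mul_comm] at this
          have := top_mul hb1 htbound hhom1 hthom
          rw [hT]
          have e1 : (r+1)*n - (r+1)*J = (r+1)*(n-J) := by rw [Nat.mul_sub]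
          rw [← e1, this, e1]
          rw [top_pow hsbound hshom (r+1), hsJ]
        have hct' : coeff (mA i (n-i)) t' = coeff (mA i (n-i)) g := by
          rw [ht', coeff_sub, hscoeff i (by omega), if_neg (by simp), sub_zero]
        -- expansion of (s+t')^q
        have hexp : coeff T (g^q) = b^q * φ (coeff T (s₀ ^ q))
            + (q : L) * (b^(r+1) * coeff (mA i (n-i)) g) := by
          conv_lhs => rw [hgst]
          rw [add_pow]
          have hq3 : q + 1 = (r + 1) + 1 + 1 := by omega
          rw [hq3, Finset.sum_range_succ, Finset.sum_range_succ, coeff_add, coeff_add]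
          have hzero : coeff T (∑ m ∈ Finset.range (r+1),
              s ^ m * t' ^ (q - m) * ((q.choose m : ℕ) : MvPolynomial (Fin 2) L)) = 0 := by
            rw [coeff_sum]
            apply Finset.sum_eq_zero
            intro m hm
            have hmr : m ≤ r := by
              have := Finset.mem_range.mp hm; omega
            by_contra hc
            have hcast : ((q.choose m : ℕ) : MvPolynomial (Fin 2) L)
                = C ((q.choose m : ℕ) : L) := by
              rw [map_natCast (C : L →+* MvPolynomial (Fin 2) L)]
            rw [hcast] at hc
            have hbnd := xbound_mul (xbound_mul (xbound_pow hsbound m)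
              (xbound_pow htbound (q - m))) (xbound_C _) T hc
            rw [hT, mA_apply0] at hbnd
            -- m*J + (q-m)*i + 0 < (r+1)*J + i
            have hlt : m*J + (q-m)*i < (r+1)*J + i := by
              have h1 : q - m = (r + 1 - m) + 1 := by omega
              have h3 : (r+1-m) * i < (r+1-m) * J :=
                mul_lt_mul_of_pos_left hij (by omega : 0 < r+1-m)
              have h4 : m*J + (r+1-m)*J = (r+1)*J := by
                rw [← add_mul]; congr 1; omega
              calc m*J + (q-m)*i = m*J + ((r+1-m)*i + i) := by rw [h1, add_mul, one_mul]
                _ < m*J + ((r+1-m)*J + i) :=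
                    Nat.add_lt_add_left (Nat.add_lt_add_right h3 i) _
                _ = (r+1)*J + i := by rw [← add_assoc, h4]
            omega
          rw [hzero, zero_add]
          -- term m = r+2 = q
          have hterm2 : coeff T (s ^ (r+1+1) * t' ^ (q - (r+1+1))
              * ((q.choose (r+1+1) : ℕ) : MvPolynomial (Fin 2) L))
              = b^q * φ (coeff T (s₀ ^ q)) := by
            have h1 : q - (r+1+1) = 0 := by omega
            have h2 : q.choose (r+1+1) = 1 := by
              have : r+1+1 = q := by omega
              rw [this, Nat.choose_self]
            rw [h1, h2, pow_zero, mul_one, Nat.cast_one, mul_one]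
            have : r+1+1 = q := by omega
            rw [this, hsq, coeff_C_mul, coeff_map]
          -- term m = r+1
          have hterm1 : coeff T (s ^ (r+1) * t' ^ (q - (r+1))
              * ((q.choose (r+1) : ℕ) : MvPolynomial (Fin 2) L))
              = (q : L) * (b^(r+1) * coeff (mA i (n-i)) g) := by
            have h1 : q - (r+1) = 1 := by omega
            have h2 : q.choose (r+1) = q := Nat.choose_succ_self_right (r+1)
            rw [h1, pow_one, h2]
            have hcast : ((q : ℕ) : MvPolynomial (Fin 2) L) = C ((q : ℕ) : L) := by
              rw [map_natCast (C : L →+* MvPolynomial (Fin 2) L)]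
            rw [hcast, mul_comm _ (C ((q : ℕ) : L)), coeff_C_mul, hmain, hct']
          rw [hterm1, hterm2]
          ring
        -- solve for the coefficient
        refine ⟨(coeff T f - a * coeff T (s₀ ^ q)) * (q : K)⁻¹ * a⁻¹, ?_⟩
        have main : φ (coeff T f) = b^q * φ (coeff T (s₀ ^ q))
            + (q : L) * (b^(r+1) * coeff (mA i (n-i)) g) := hcoefff.trans hexp
        rw [map_mul, map_mul, map_sub, map_mul, map_inv₀, map_inv₀, map_natCast, hφa, main]
        have hbq : b ^ q ≠ 0 := pow_ne_zero _ hb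
        have hpow : b * b ^ (r+1) = b ^ q := by
          rw [hqdef, ← pow_succ']
        rw [add_sub_cancel_left]
        have hfin : b * ((q:L) * (b^(r+1) * coeff (mA i (n-i)) g) * (q:L)⁻¹ * (b^q)⁻¹)
            = coeff (mA i (n-i)) g := by
          rw [show b * ((q:L) * (b^(r+1) * coeff (mA i (n-i)) g) * (q:L)⁻¹ * (b^q)⁻¹)
              = ((q:L) * (q:L)⁻¹) * ((b * b^(r+1)) * (b^q)⁻¹ * coeff (mA i (n-i)) g) from by
            ring, mul_inv_cancel₀ hqL, hpow, mul_inv_cancel₀ hbq, one_mul, one_mul]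
        exact hfin.symm
      · -- i ≥ J : same as base case
        rcases Nat.lt_or_ge J i with hJi | hJi
        · refine ⟨0, ?_⟩
          rw [map_zero, mul_zero]
          by_contra h
          have := hbound _ h
          rw [mA_apply0] at this
          omega
        · have hiJ : i = J := by omega
          refine ⟨1, ?_⟩
          rw [map_one, mul_one, hiJ]
  -- assemble h
  have hP : ∀ i, ∃ e : K, coeff (mA i (n - i)) g = b * φ e := fun i => key (J - i) i le_rfl
  choose e he using hP
  set h : MvPolynomial (Fin 2) K :=
    ∑ w ∈ Finset.range (n+1), monomial (mA w (n - w)) (e w) with hh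
  have hhhom : h.IsHomogeneous n := by
    apply IsHomogeneous.sum
    intro w hw
    apply isHomogeneous_monomial
    rw [mA_degree]
    have := Finset.mem_range.mp hw
    omega
  refine ⟨a, h, hhhom, hinj ?_⟩
  have hgh : g = C b * MvPolynomial.map φ h := by
    apply MvPolynomial.ext
    intro μ
    rw [coeff_C_mul, coeff_map]
    by_cases hμ : μ.degree = n
    · have hd := deg2 μ
      have hμ0 : μ 0 ≤ n := by omega
      have hform : μ = mA (μ 0) (n - μ 0) := by
        conv_lhs => rw [eq_mA μ]
        congr 1
        omega
      rw [hform, hh, coeff_msum (μ 0) hμ0 (fun j hj => by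
        have := Finset.mem_range.mp hj; omega),
        if_pos (Finset.mem_range.mpr (by omega))]
      exact he (μ 0)
    · rw [hg.coeff_eq_zero hμ, hh, coeff_msum_off hμ (fun j hj => by
        have := Finset.mem_range.mp hj; omega), map_zero, mul_zero]
  rw [hfg, map_mul, map_pow, MvPolynomial.map_C, hgh, mul_pow, ← map_pow C b q, ← hφa]
end MPD

/-- If `f ∈ k[x,z]` is homogeneous of degree `d`, `q` a prime dividing `m`, `m ∣ d`,
`char k ∤ q`, and `f = g^q` over the algebraic closure, then `f = a ⬝ h^q` over `k`. -/
theorem mth_power_descent (k : Type*) [Field k] (m d q : ℕ) (hm : 2 ≤ m) (hmd : m ∣ d)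
    (hq : q.Prime) (hqm : q ∣ m) (hchar : ¬ (ringChar k ∣ q))
    (f : MvPolynomial (Fin 2) k) (hf : f.IsHomogeneous d)
    (g : MvPolynomial (Fin 2) (AlgebraicClosure k))
    (hg : g.IsHomogeneous (d / q))
    (hfg : MvPolynomial.map (algebraMap k (AlgebraicClosure k)) f = g ^ q) :
    ∃ (a : k) (h : MvPolynomial (Fin 2) k),
      h.IsHomogeneous (d / q) ∧ f = C a * h ^ q := by
  have hqK : (q : k) ≠ 0 := by
    intro h
    exact hchar ((CharP.cast_eq_zero_iff k (ringChar k) q).mp h)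
  exact MPD.descent (algebraMap k (AlgebraicClosure k)) q (d / q) hq.two_le hqK f g hg hfg
end

section
/- Let p be a prime, m ≥ 2 with p ∤ m, d ≥ 1, and let Φ(p) = #((F_p^×)^m)/p be the proportion of elements of F_p that are nonzero m-th powers. The proportion of coefficient vectors (c_0,…,c_d) ∈ F_p^{d+1} such that the corresponding binary form f(x,z) takes at least one value in (F_p^×)^m at some point of P¹(F_p) is at least 1 − (1 − Φ(p))^r, where r = min(p+1, d+1). -/
open Finset Polynomial

set_option maxHeartbeats 1000000 in
/-- Surjectivity of the evaluation map at `r = min (p+1) (d+1)` points of `P¹(F_p)`. -/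
lemma eval_surj_aux (p d : ℕ) [Fact p.Prime] (t : Fin (min (p + 1) (d + 1)) → ZMod p) :
    ∃ c : Fin (d + 1) → ZMod p, ∀ i : Fin (min (p + 1) (d + 1)),
      (if (i : ℕ) < p then ∑ j : Fin (d + 1), c j * (((i : ℕ) : ZMod p)) ^ (j : ℕ)
        else c (Fin.last d)) = t i := by
  haveI : NeZero p := ⟨(Fact.out : p.Prime).ne_zero⟩
  have hrd : min (p + 1) (d + 1) ≤ d + 1 := min_le_right _ _
  by_cases hrp : min (p + 1) (d + 1) ≤ p
  · -- all chosen points are affine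
    have hinj : Set.InjOn (fun i : Fin (min (p + 1) (d + 1)) => ((i : ℕ) : ZMod p))
        ↑(univ : Finset (Fin (min (p + 1) (d + 1)))) := by
      intro i _ j _ h
      apply Fin.ext
      have h2 := congrArg ZMod.val h
      rwa [ZMod.val_cast_of_lt (lt_of_lt_of_le i.isLt hrp),
        ZMod.val_cast_of_lt (lt_of_lt_of_le j.isLt hrp)] at h2
    obtain ⟨P, hPdeg, hPval⟩ : ∃ P : Polynomial (ZMod p),
        P.degree < (min (p + 1) (d + 1) : ℕ) ∧
        ∀ i : Fin (min (p + 1) (d + 1)), P.eval ((i : ℕ) : ZMod p) = t i := by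
      refine ⟨Lagrange.interpolate univ (fun i : Fin (min (p + 1) (d + 1)) => ((i : ℕ) : ZMod p)) t, ?_, fun i => ?_⟩
      · simpa using Lagrange.degree_interpolate_lt t hinj
      · exact Lagrange.eval_interpolate_at_node t hinj (mem_univ i)
    have hnd : P.natDegree < d + 1 := by
      by_cases h0 : P = 0
      · simp [h0]
      · exact (Polynomial.natDegree_lt_iff_degree_lt h0).mpr
          (lt_of_lt_of_le hPdeg (by exact_mod_cast Nat.cast_le.mpr hrd))
    refine ⟨fun j => P.coeff j, fun i => ?_⟩
    rw [if_pos (lt_of_lt_of_le i.isLt hrp), ← hPval i,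
      Polynomial.eval_eq_sum_range' hnd, ← Fin.sum_univ_eq_sum_range]
  · -- r = p + 1 : affine points plus the point at infinity
    have hrp1 : min (p + 1) (d + 1) = p + 1 := le_antisymm (min_le_left _ _) (by omega)
    have hpd : p ≤ d := by omega
    have hplt : p < min (p + 1) (d + 1) := by omega
    have hinj : Set.InjOn (id : ZMod p → ZMod p) ↑(univ : Finset (ZMod p)) :=
      Function.injective_id.injOn
    set f : ZMod p → ZMod p :=
      fun x => t ⟨x.val, (ZMod.val_lt x).trans hplt⟩ - t ⟨p, hplt⟩ * x ^ d with hf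
    obtain ⟨Q, hQdeg, hQval⟩ : ∃ Q : Polynomial (ZMod p),
        Q.degree < (p : ℕ) ∧ ∀ x : ZMod p, Q.eval x = f x := by
      refine ⟨Lagrange.interpolate univ id f, ?_, fun x => ?_⟩
      · have h := Lagrange.degree_interpolate_lt f hinj
        rwa [Finset.card_univ, ZMod.card] at h
      · exact Lagrange.eval_interpolate_at_node f hinj (mem_univ x)
    have hcd : Q.coeff d = 0 :=
      Polynomial.coeff_eq_zero_of_degree_lt
        (lt_of_lt_of_le hQdeg (by exact_mod_cast Nat.cast_le.mpr hpd))
    have hnd : Q.natDegree < d + 1 := by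
      by_cases h0 : Q = 0
      · simp [h0]
      · exact (Polynomial.natDegree_lt_iff_degree_lt h0).mpr
          (lt_of_lt_of_le hQdeg (by exact_mod_cast Nat.cast_le.mpr (by omega : p ≤ d + 1)))
    refine ⟨fun j => Q.coeff j + if j = Fin.last d then t ⟨p, hplt⟩ else 0, fun i => ?_⟩
    by_cases hi : (i : ℕ) < p
    · rw [if_pos hi]
      have hsum : ∑ j : Fin (d + 1),
          (Q.coeff j + if j = Fin.last d then t ⟨p, hplt⟩ else 0) * ((i : ℕ) : ZMod p) ^ (j : ℕ)
          = (∑ j : Fin (d + 1), Q.coeff j * ((i : ℕ) : ZMod p) ^ (j : ℕ))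
            + t ⟨p, hplt⟩ * ((i : ℕ) : ZMod p) ^ d := by
        simp_rw [add_mul, Finset.sum_add_distrib, ite_mul, zero_mul]
        congr 1
        rw [Finset.sum_ite_eq' (univ : Finset (Fin (d + 1))) (Fin.last d)
          (fun j => t ⟨p, hplt⟩ * ((i : ℕ) : ZMod p) ^ (j : ℕ))]
        simp [Fin.val_last]
      have hfin : ∑ j : Fin (d + 1), Q.coeff j * ((i : ℕ) : ZMod p) ^ (j : ℕ)
          = Q.eval ((i : ℕ) : ZMod p) := by
        rw [Polynomial.eval_eq_sum_range' hnd, ← Fin.sum_univ_eq_sum_range]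
      rw [hsum, hfin, hQval]
      simp only [hf]
      have hix : t ⟨ZMod.val (((i : ℕ) : ZMod p)), (ZMod.val_lt _).trans hplt⟩ = t i :=
        congrArg t (Fin.ext (ZMod.val_cast_of_lt hi))
      rw [hix]; ring
    · rw [if_neg hi]
      have hieq : i = ⟨p, hplt⟩ := by
        apply Fin.ext
        show (i : ℕ) = p
        have h2 := i.isLt
        omega
      rw [hieq]
      simp [Fin.val_last, hcd]

/-- The proportion of coefficient vectors `(c₀,…,c_d) ∈ F_p^{d+1}` whose binary form
`f(x,z) = Σ cᵢ xⁱ z^{d−i}` takes a nonzero `m`-th power value at some point of `P¹(F_p)`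
is at least `1 − (1 − Φ(p))^r`, where `Φ(p)` is the proportion of nonzero `m`-th powers in
`F_p` and `r = min(p+1, d+1)`. -/
theorem lower_bound_matrix_method (p m d : ℕ) [Fact p.Prime] (hm : 2 ≤ m) (hpm : ¬ p ∣ m)
    (hd : 1 ≤ d) :
    (1 : ℝ) -
      (1 - (Nat.card {y : ZMod p // y ≠ 0 ∧ ∃ x : ZMod p, x ^ m = y} : ℝ) / p)
        ^ (min (p + 1) (d + 1)) ≤
    (Nat.card {c : Fin (d + 1) → ZMod p //
        (∃ a : ZMod p, (∑ i : Fin (d + 1), c i * a ^ (i : ℕ)) ≠ 0 ∧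
            ∃ x : ZMod p, x ^ m = ∑ i : Fin (d + 1), c i * a ^ (i : ℕ)) ∨
          (c (Fin.last d) ≠ 0 ∧ ∃ x : ZMod p, x ^ m = c (Fin.last d))} : ℝ) /
      p ^ (d + 1) := by
  classical
  haveI : NeZero p := ⟨(Fact.out : p.Prime).ne_zero⟩
  simp only [Nat.card_eq_fintype_card, Fintype.card_subtype]
  set E : (Fin (d + 1) → ZMod p) → (Fin (min (p + 1) (d + 1)) → ZMod p) := fun c i =>
    if (i : ℕ) < p then ∑ j : Fin (d + 1), c j * (((i : ℕ) : ZMod p)) ^ (j : ℕ)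
    else c (Fin.last d) with hE
  have hsurj : ∀ t, ∃ c, E c = t := fun t => by
    obtain ⟨c, hc⟩ := eval_surj_aux p d t
    exact ⟨c, funext hc⟩
  have hEadd : ∀ c c', E (c + c') = E c + E c' := by
    intro c c'; funext i
    by_cases hi : (i : ℕ) < p <;>
      simp [hE, hi, add_mul, Finset.sum_add_distrib]
  have hEsub : ∀ c c', E (c - c') = E c - E c' := by
    intro c c'; funext i
    by_cases hi : (i : ℕ) < p <;>
      simp [hE, hi, sub_mul, Finset.sum_sub_distrib]
  have hfib : ∀ t, (univ.filter fun c => E c = t).card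
      = (univ.filter fun c => E c = 0).card := by
    intro t
    obtain ⟨c₀, hc₀⟩ := hsurj t
    refine Finset.card_nbij' (fun c => c - c₀) (fun c => c + c₀) ?_ ?_ ?_ ?_
    · intro c hc
      simp only [mem_coe, mem_filter, mem_univ, true_and] at hc ⊢
      rw [hEsub, hc, hc₀, sub_self]
    · intro c hc
      simp only [mem_coe, mem_filter, mem_univ, true_and] at hc ⊢
      rw [hEadd, hc, hc₀, zero_add]
    · intro c _; simp
    · intro c _; simp
  set N := (univ.filter fun c => E c = 0).card with hNdef
  have hcardfun : Fintype.card (Fin (d + 1) → ZMod p) = p ^ (d + 1) := by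
    simp [ZMod.card]
  have hcardfun2 : Fintype.card (Fin (min (p + 1) (d + 1)) → ZMod p)
      = p ^ (min (p + 1) (d + 1)) := by
    simp [ZMod.card]
  have hNtot : p ^ (min (p + 1) (d + 1)) * N = p ^ (d + 1) := by
    have h0 : (univ : Finset (Fin (d + 1) → ZMod p)).card
        = ∑ t : Fin (min (p + 1) (d + 1)) → ZMod p,
          (univ.filter fun c => E c = t).card :=
      Finset.card_eq_sum_card_fiberwise (fun c _ => mem_univ (E c))
    rw [Finset.sum_congr rfl (fun t _ => hfib t), Finset.sum_const] at h0
    simp only [Finset.card_univ] at h0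
    rw [hcardfun, hcardfun2, smul_eq_mul] at h0
    omega
  set Sp : Finset (ZMod p) := univ.filter (fun y => y ≠ 0 ∧ ∃ x : ZMod p, x ^ m = y)
    with hSp
  set Sc : Finset (ZMod p) := univ.filter (fun y => ¬(y ≠ 0 ∧ ∃ x : ZMod p, x ^ m = y))
    with hSc
  have hSle : Sp.card ≤ p := by
    have h1 := Finset.card_le_univ Sp
    simpa [ZMod.card] using h1
  have hScard : Sc.card = p - Sp.card := by
    rw [hSc, Finset.filter_not, Finset.card_sdiff_of_subset (Finset.filter_subset _ _),
      Finset.card_univ, ZMod.card]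
  set T : Finset (Fin (min (p + 1) (d + 1)) → ZMod p) := Fintype.piFinset (fun _ => Sc)
    with hT
  have hTcard : T.card = (p - Sp.card) ^ (min (p + 1) (d + 1)) := by
    simp [hT, hScard]
  have hBsub : (univ.filter fun c : Fin (d + 1) → ZMod p =>
      ¬((∃ a : ZMod p, (∑ i : Fin (d + 1), c i * a ^ (i : ℕ)) ≠ 0 ∧
            ∃ x : ZMod p, x ^ m = ∑ i : Fin (d + 1), c i * a ^ (i : ℕ)) ∨
          (c (Fin.last d) ≠ 0 ∧ ∃ x : ZMod p, x ^ m = c (Fin.last d))))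
      ⊆ univ.filter (fun c => E c ∈ T) := by
    intro c hc
    simp only [mem_filter, mem_univ, true_and, not_or] at hc ⊢
    obtain ⟨h1, h2⟩ := hc
    rw [hT, Fintype.mem_piFinset]
    intro i
    rw [hSc, Finset.mem_filter]
    refine ⟨mem_univ _, ?_⟩
    by_cases hi : (i : ℕ) < p
    · intro hcon
      rw [show E c i = ∑ j : Fin (d + 1), c j * (((i : ℕ) : ZMod p)) ^ (j : ℕ)
        from if_pos hi] at hcon
      exact h1 ⟨((i : ℕ) : ZMod p), hcon⟩
    · intro hcon
      rw [show E c i = c (Fin.last d) from if_neg hi] at hcon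
      exact h2 hcon
  have hBcount : (univ.filter fun c => E c ∈ T).card = T.card * N := by
    have h0 : (univ.filter fun c => E c ∈ T).card
        = ∑ t ∈ T, ((univ.filter fun c => E c ∈ T).filter fun c => E c = t).card :=
      Finset.card_eq_sum_card_fiberwise (fun c hc => (mem_filter.mp hc).2)
    rw [h0, Finset.sum_congr rfl (fun t ht => ?_), Finset.sum_const, smul_eq_mul]
    have heq : ((univ.filter fun c => E c ∈ T).filter fun c => E c = t)
        = univ.filter fun c => E c = t := by
      rw [Finset.filter_filter]
      refine Finset.filter_congr (fun c _ => ?_)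
      constructor
      · exact fun h => h.2
      · exact fun h => ⟨h ▸ ht, h⟩
    rw [heq, hfib t]
  have hkey : p ^ (d + 1) ≤ (univ.filter fun c : Fin (d + 1) → ZMod p =>
      ((∃ a : ZMod p, (∑ i : Fin (d + 1), c i * a ^ (i : ℕ)) ≠ 0 ∧
            ∃ x : ZMod p, x ^ m = ∑ i : Fin (d + 1), c i * a ^ (i : ℕ)) ∨
          (c (Fin.last d) ≠ 0 ∧ ∃ x : ZMod p, x ^ m = c (Fin.last d)))).card
        + (p - Sp.card) ^ (min (p + 1) (d + 1)) * N := by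
    have hsplit := Finset.card_filter_add_card_filter_not
      (s := (univ : Finset (Fin (d + 1) → ZMod p)))
      (fun c => ((∃ a : ZMod p, (∑ i : Fin (d + 1), c i * a ^ (i : ℕ)) ≠ 0 ∧
            ∃ x : ZMod p, x ^ m = ∑ i : Fin (d + 1), c i * a ^ (i : ℕ)) ∨
          (c (Fin.last d) ≠ 0 ∧ ∃ x : ZMod p, x ^ m = c (Fin.last d))))
    rw [card_univ, hcardfun] at hsplit
    have hble := Finset.card_le_card hBsub
    rw [hBcount, hTcard] at hble
    linarith
  -- pass to the reals
  have hppos : (0 : ℝ) < p := by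
    exact_mod_cast (Fact.out : p.Prime).pos
  have h1 : (1 : ℝ) - (Sp.card : ℝ) / p = ((p - Sp.card : ℕ) : ℝ) / p := by
    rw [Nat.cast_sub hSle, sub_div, div_self hppos.ne']
  rw [h1, div_pow, le_div_iff₀ (by positivity)]
  have hNr : ((p : ℝ)) ^ (min (p + 1) (d + 1)) * N = (p : ℝ) ^ (d + 1) := by
    exact_mod_cast hNtot
  have hkeyR : (p : ℝ) ^ (d + 1) ≤
      ((univ.filter fun c : Fin (d + 1) → ZMod p =>
      ((∃ a : ZMod p, (∑ i : Fin (d + 1), c i * a ^ (i : ℕ)) ≠ 0 ∧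
            ∃ x : ZMod p, x ^ m = ∑ i : Fin (d + 1), c i * a ^ (i : ℕ)) ∨
          (c (Fin.last d) ≠ 0 ∧ ∃ x : ZMod p, x ^ m = c (Fin.last d)))).card : ℝ)
        + ((p - Sp.card : ℕ) : ℝ) ^ (min (p + 1) (d + 1)) * N := by
    exact_mod_cast hkey
  rw [← hNr] at hkeyR ⊢
  have hexp : (1 - ((p - Sp.card : ℕ) : ℝ) ^ (min (p + 1) (d + 1))
        / (p : ℝ) ^ (min (p + 1) (d + 1)))
      * ((p : ℝ) ^ (min (p + 1) (d + 1)) * N)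
      = (p : ℝ) ^ (min (p + 1) (d + 1)) * N
        - ((p - Sp.card : ℕ) : ℝ) ^ (min (p + 1) (d + 1)) * N := by
    field_simp
  rw [hexp]
  linarith
end
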